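/- Let α > -1 and let μ be a finite positive Borel measure on the closed unit disk. Suppose there exists c > 0 such that for every t ∈ (0,1), ∫ |1 - tz|^{-2α-4} dμ(z) ≤ c·(1-t²)^{-α-2}. Then there exists a ≥ 1 such that for every s ∈ (0,1], μ({z : |z| ≤ 1, |1 - z| < s}) ≤ a·s^{α+2}. -/

import Mathlib

open MeasureTheory

/-- Carleson condition from testing against kernels: if a finite positive
measure `μ` on the closed unit disk satisfies
`∫ |1 - tz|^{-2α-4} dμ ≤ c (1-t²)^{-α-2}` for all `t ∈ (0,1)`, then there is
`a ≥ 1` with `μ({|z| ≤ 1, |1-z| < s}) ≤ a s^{α+2}` for all `s ∈ (0,1]`. -/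
theorem carleson_window_estimate (α : ℝ) (hα : -1 < α) (μ : Measure ℂ)
    [IsFiniteMeasure μ] (hsupp : μ {z : ℂ | ¬ ‖z‖ ≤ 1} = 0)
    (c : ℝ) (hc : 0 < c)
    (htest : ∀ t : ℝ, 0 < t → t < 1 →
      ∫⁻ z, ENNReal.ofReal (‖1 - ((t : ℝ) : ℂ) * z‖ ^ (-2 * α - 4)) ∂μ
        ≤ ENNReal.ofReal (c * (1 - t ^ 2) ^ (-α - 2))) :
    ∃ a : ℝ, 1 ≤ a ∧ ∀ s : ℝ, 0 < s → s ≤ 1 →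
      μ {z : ℂ | ‖z‖ ≤ 1 ∧ ‖1 - z‖ < s} ≤ ENNReal.ofReal (a * s ^ (α + 2)) := by
  set K : ℝ := c * (2 / 3 : ℝ) ^ (-α - 2) * (3 : ℝ) ^ (2 * α + 4) with hK
  have hKpos : 0 < K := by
    have h1 : (0:ℝ) < (2 / 3 : ℝ) ^ (-α - 2) := Real.rpow_pos_of_pos (by norm_num) _
    have h2 : (0:ℝ) < (3 : ℝ) ^ (2 * α + 4) := Real.rpow_pos_of_pos (by norm_num) _
    positivity
  refine ⟨max 1 K, le_max_left _ _, ?_⟩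
  intro s hs hs1
  set t : ℝ := 1 / (1 + 2 * s) with ht
  have h1 : (0:ℝ) < 1 + 2 * s := by linarith
  have ht0 : 0 < t := by positivity
  have ht1 : t < 1 := by rw [ht, div_lt_one h1]; linarith
  have h1t : 1 - t = 2 * s / (1 + 2 * s) := by
    rw [ht, eq_div_iff h1.ne']; field_simp; ring
  have h1t_le : 1 - t ≤ 2 * s := by
    rw [h1t, div_le_iff₀ h1]; nlinarith
  have h1t_ge : 2 * s / 3 ≤ 1 - t := by
    rw [h1t, div_le_div_iff₀ (by norm_num) h1]; nlinarith
  have hsq : 2 * s / 3 ≤ 1 - t ^ 2 := by nlinarith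
  have hsq0 : (0:ℝ) < 2 * s / 3 := by positivity
  set W : Set ℂ := {z : ℂ | ‖z‖ ≤ 1 ∧ ‖1 - z‖ < s} with hW
  have hWmeas : MeasurableSet W := by
    apply MeasurableSet.inter
    · exact measurableSet_le measurable_norm measurable_const
    · exact measurableSet_lt ((measurable_const.sub measurable_id).norm) measurable_const
  have hexp : -2 * α - 4 ≤ 0 := by linarith
  -- pointwise kernel lower bound on W
  have hker : ∀ z ∈ W, (3 * s) ^ (-2 * α - 4) ≤ ‖1 - ((t : ℝ) : ℂ) * z‖ ^ (-2 * α - 4) := by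
    intro z hz
    obtain ⟨hz1, hz2⟩ := hz
    have hnt : ‖((t:ℝ):ℂ)‖ = t := by
      simp [Complex.norm_real, abs_of_pos ht0]
    have hlow : 1 - t ≤ ‖1 - ((t : ℝ) : ℂ) * z‖ := by
      have hle := norm_sub_norm_le (1 : ℂ) (((t:ℝ):ℂ) * z)
      have h2 : ‖((t:ℝ):ℂ) * z‖ = t * ‖z‖ := by rw [norm_mul, hnt]
      rw [norm_one, h2] at hle
      nlinarith
    have hpos : (0:ℝ) < ‖1 - ((t : ℝ) : ℂ) * z‖ := lt_of_lt_of_le (by linarith) hlow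
    have hup : ‖1 - ((t : ℝ) : ℂ) * z‖ ≤ 3 * s := by
      have hdecomp : (1 : ℂ) - ((t:ℝ):ℂ) * z = (1 - z) + ((1 : ℂ) - ((t:ℝ):ℂ)) * z := by
        ring
      have hbd := norm_add_le ((1:ℂ) - z) (((1 : ℂ) - ((t:ℝ):ℂ)) * z)
      have hnorm1t : ‖(1 : ℂ) - ((t:ℝ):ℂ)‖ = 1 - t := by
        have : (1 : ℂ) - ((t:ℝ):ℂ) = (((1 - t : ℝ)) : ℂ) := by push_cast; ring
        rw [this, Complex.norm_real, Real.norm_eq_abs, abs_of_nonneg (by linarith)]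
      have h4 : ‖((1 : ℂ) - ((t:ℝ):ℂ)) * z‖ ≤ 2 * s := by
        rw [norm_mul, hnorm1t]; nlinarith
      rw [hdecomp]
      calc ‖(1 - z) + ((1 : ℂ) - ((t:ℝ):ℂ)) * z‖ ≤ ‖(1:ℂ) - z‖ + ‖((1 : ℂ) - ((t:ℝ):ℂ)) * z‖ := hbd
        _ ≤ 3 * s := by linarith
    exact Real.rpow_le_rpow_of_nonpos hpos hup hexp
  -- measurability of the kernel
  have hmeasker : Measurable fun z : ℂ =>
      ENNReal.ofReal (‖1 - ((t : ℝ) : ℂ) * z‖ ^ (-2 * α - 4)) := by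
    apply Measurable.ennreal_ofReal
    exact ((measurable_const.sub (measurable_const.mul measurable_id)).norm).pow measurable_const
  have key : μ W * ENNReal.ofReal ((3 * s) ^ (-2 * α - 4))
      ≤ ENNReal.ofReal (c * (1 - t ^ 2) ^ (-α - 2)) := by
    calc μ W * ENNReal.ofReal ((3 * s) ^ (-2 * α - 4))
        = ∫⁻ _ in W, ENNReal.ofReal ((3 * s) ^ (-2 * α - 4)) ∂μ := by
          rw [setLIntegral_const, mul_comm]
      _ ≤ ∫⁻ z in W, ENNReal.ofReal (‖1 - ((t : ℝ) : ℂ) * z‖ ^ (-2 * α - 4)) ∂μ := by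
          apply setLIntegral_mono hmeasker
          intro z hz
          exact ENNReal.ofReal_le_ofReal (hker z hz)
      _ ≤ ∫⁻ z, ENNReal.ofReal (‖1 - ((t : ℝ) : ℂ) * z‖ ^ (-2 * α - 4)) ∂μ :=
          setLIntegral_le_lintegral _ _
      _ ≤ ENNReal.ofReal (c * (1 - t ^ 2) ^ (-α - 2)) := htest t ht0 ht1
  have hCpos : (0:ℝ) < (3 * s) ^ (-2 * α - 4) := Real.rpow_pos_of_pos (by linarith) _
  have hC0 : ENNReal.ofReal ((3 * s) ^ (-2 * α - 4)) ≠ 0 :=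
    (ENNReal.ofReal_pos.mpr hCpos).ne'
  have hCtop : ENNReal.ofReal ((3 * s) ^ (-2 * α - 4)) ≠ ⊤ := ENNReal.ofReal_ne_top
  have hdiv : μ W ≤ ENNReal.ofReal (c * (1 - t ^ 2) ^ (-α - 2))
      / ENNReal.ofReal ((3 * s) ^ (-2 * α - 4)) :=
    (ENNReal.le_div_iff_mul_le (Or.inl hC0) (Or.inl hCtop)).mpr key
  have hreal : c * (1 - t ^ 2) ^ (-α - 2) / (3 * s) ^ (-2 * α - 4)
      ≤ max 1 K * s ^ (α + 2) := by
    have e1 : (1 - t ^ 2) ^ (-α - 2) ≤ (2 * s / 3) ^ (-α - 2) :=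
      Real.rpow_le_rpow_of_nonpos hsq0 hsq (by linarith)
    have e2 : (3 * s) ^ (-2 * α - 4) = ((3 * s) ^ (2 * α + 4))⁻¹ := by
      rw [← Real.rpow_neg (by linarith)]; ring_nf
    have e3 : (0:ℝ) < (3 * s) ^ (2 * α + 4) := Real.rpow_pos_of_pos (by linarith) _
    rw [e2, div_eq_mul_inv, inv_inv]
    have e4 : (2 * s / 3) ^ (-α - 2) = (2/3 : ℝ) ^ (-α - 2) * s ^ (-α - 2) := by
      rw [show 2 * s / 3 = (2/3) * s by ring,
        Real.mul_rpow (by norm_num) hs.le]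
    have e5 : (3 * s) ^ (2 * α + 4) = (3:ℝ) ^ (2 * α + 4) * s ^ (2 * α + 4) := by
      rw [Real.mul_rpow (by norm_num) hs.le]
    have e6 : s ^ (-α - 2) * s ^ (2 * α + 4) = s ^ (α + 2) := by
      rw [← Real.rpow_add hs]; ring_nf
    have e7 : c * (1 - t ^ 2) ^ (-α - 2) * (3 * s) ^ (2 * α + 4)
        ≤ K * s ^ (α + 2) := by
      calc c * (1 - t ^ 2) ^ (-α - 2) * (3 * s) ^ (2 * α + 4)
          ≤ c * (2 * s / 3) ^ (-α - 2) * (3 * s) ^ (2 * α + 4) := by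
            apply mul_le_mul_of_nonneg_right _ e3.le
            exact mul_le_mul_of_nonneg_left e1 hc.le
        _ = K * s ^ (α + 2) := by
            rw [e4, e5, hK, ← e6]; ring
    have e8 : K * s ^ (α + 2) ≤ max 1 K * s ^ (α + 2) := by
      apply mul_le_mul_of_nonneg_right (le_max_right _ _)
      exact (Real.rpow_pos_of_pos hs _).le
    linarith
  calc μ W ≤ ENNReal.ofReal (c * (1 - t ^ 2) ^ (-α - 2))
      / ENNReal.ofReal ((3 * s) ^ (-2 * α - 4)) := hdiv
    _ = ENNReal.ofReal (c * (1 - t ^ 2) ^ (-α - 2) / (3 * s) ^ (-2 * α - 4)) :=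
        (ENNReal.ofReal_div_of_pos hCpos).symm
    _ ≤ ENNReal.ofReal (max 1 K * s ^ (α + 2)) := ENNReal.ofReal_le_ofReal hreal
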